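/- Let S be a nonempty finite type, let B_1, …, B_K and P_sys be row-stochastic real matrices indexed by S × S, set Q := B_1 · B_2 ⋯ B_K · P_sys, let ρ : S → ℝ, and suppose Q^t converges entrywise as t → ∞ to the matrix whose (s, s') entry is ρ(s') (all rows equal to ρ). Then for all vectors c_1, …, c_K : S → ℝ and every s ∈ S, lim_{T→∞} (1/T) Σ_{t=0}^{T−1} ( Q^t ( Σ_{ℓ=1}^K B_1 ⋯ B_{ℓ−1} c_ℓ ) )(s) = Σ_{ℓ=1}^K Σ_{s' ∈ S} (ρᵀ B_1 ⋯ B_{ℓ−1})(s') c_ℓ(s'), where the empty matrix product is the identity. (The long-run average per-period reward of an atomic policy equals the sum over atomic steps of the per-step stationary average rewards, ĝ_π̂ = Σ_{ℓ=1}^K ĝ_{ℓ,π̂}, the identity established in the proof of Proposition 1.) -/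

import Mathlib

open Filter Finset Matrix

/-- A row-stochastic matrix. -/
def RowStochastic {S : Type*} [Fintype S] (P : Matrix S S ℝ) : Prop :=
  (∀ s s', 0 ≤ P s s') ∧ ∀ s, ∑ s', P s s' = 1

/-- The long-run average per-period reward of an atomic policy equals the sum over atomic steps
of the per-step stationary average rewards (`ĝ_π̂ = Σ_{ℓ} ĝ_{ℓ,π̂}`): here
`Q = B 0 * ⋯ * B (K-1) * Psys` and the `ℓ`-th per-step reward is weighted by the prefix product
`B 0 * ⋯ * B (ℓ-1)`. -/
theorem stmt15 {S : Type*} [Fintype S] [DecidableEq S] [Nonempty S]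
    (K : ℕ) (hK : 1 ≤ K) (B : ℕ → Matrix S S ℝ) (hB : ∀ ℓ, ℓ < K → RowStochastic (B ℓ))
    (Psys : Matrix S S ℝ) (hPsys : RowStochastic Psys) (ρ : S → ℝ)
    (hconv : Filter.Tendsto (fun t : ℕ => (((List.range K).map B).prod * Psys) ^ t)
      Filter.atTop (nhds (Matrix.of fun _ s' => ρ s'))) :
    ∀ c : ℕ → S → ℝ, ∀ s : S,
      Filter.Tendsto
        (fun T : ℕ => (T : ℝ)⁻¹ * ∑ t ∈ Finset.range T,
          (((((List.range K).map B).prod * Psys) ^ t) *ᵥ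
            fun u => ∑ ℓ ∈ Finset.range K, ((((List.range ℓ).map B).prod) *ᵥ c ℓ) u) s)
        Filter.atTop
        (nhds (∑ ℓ ∈ Finset.range K, ∑ s',
          (ρ ᵥ* ((List.range ℓ).map B).prod) s' * c ℓ s')) := by
  intro c s
  set Q : Matrix S S ℝ := ((List.range K).map B).prod * Psys with hQ
  set w : S → ℝ := fun u => ∑ ℓ ∈ Finset.range K, ((((List.range ℓ).map B).prod) *ᵥ c ℓ) u
    with hw
  -- entrywise convergence
  have hentry : ∀ a b : S, Tendsto (fun t : ℕ => (Q ^ t) a b) atTop (nhds (ρ b)) := by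
    intro a b
    have := hconv
    replace this := tendsto_pi_nhds.1 this
    have := this a
    rw [tendsto_pi_nhds] at this
    exact this b
  -- pointwise limit of the reward sequence
  have hpt : Tendsto (fun t : ℕ => ((Q ^ t) *ᵥ w) s) atTop (nhds (∑ b, ρ b * w b)) := by
    simp only [mulVec, dotProduct]
    exact tendsto_finset_sum _ fun b _ => (hentry s b).mul_const (w b)
  have hlim : (∑ b, ρ b * w b)
      = ∑ ℓ ∈ Finset.range K, ∑ s', (ρ ᵥ* ((List.range ℓ).map B).prod) s' * c ℓ s' := by
    simp only [hw, mulVec, vecMul, dotProduct, Finset.mul_sum, Finset.sum_mul]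
    rw [Finset.sum_comm]
    refine Finset.sum_congr rfl fun ℓ _ => ?_
    rw [Finset.sum_comm]
    refine Finset.sum_congr rfl fun b _ => Finset.sum_congr rfl fun u _ => ?_
    ring
  rw [← hlim]
  exact hpt.cesaro
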